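/- Under the kinematics ṗ_x(t) = u(t)·cos ψ(t) − v(t)·sin ψ(t), ṗ_y(t) = u(t)·sin ψ(t) + v(t)·cos ψ(t), ψ̇(t) = r(t), with p_des differentiable at t, error e(t) = p_des(t) − p(t) nonzero, e_d(t) = ‖e(t)‖, and ψ_e(t) ∈ ℝ differentiable with e_x = e_d·cos(ψ − ψ_e) and e_y = e_d·sin(ψ − ψ_e), the orientation error e_o(t) = (e_x(t)/e_d(t))·sin ψ(t) − (e_y(t)/e_d(t))·cos ψ(t) is differentiable at t with derivative ė_o = r·cos ψ_e + (u/e_d)·sin ψ_e·cos ψ_e + (v/e_d)·cos² ψ_e − (ṗ_{x,des}/e_d)·(sin ψ_e·cos(ψ − ψ_e) − sin ψ) − (ṗ_{y,des}/e_d)·(sin ψ_e·sin(ψ − ψ_e) + cos ψ). -/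

import Mathlib

open Real

/-- Derivative of the orientation error
`e_o = (e_x/e_d)·sin ψ − (e_y/e_d)·cos ψ` (with `e_x = p_{x,des} − p_x`, etc.,
`e_d = ‖e‖`) under the USV kinematics `ṗ_x = u cos ψ − v sin ψ`,
`ṗ_y = u sin ψ + v cos ψ`, `ψ̇ = r`, where the differentiable angle `ψ_e` satisfies
`e_x = e_d·cos(ψ−ψ_e)` and `e_y = e_d·sin(ψ−ψ_e)`:
`ė_o = r cos ψ_e + (u/e_d) sin ψ_e cos ψ_e + (v/e_d) cos² ψ_e
  − (ṗ_{x,des}/e_d)(sin ψ_e cos(ψ−ψ_e) − sin ψ)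
  − (ṗ_{y,des}/e_d)(sin ψ_e sin(ψ−ψ_e) + cos ψ)`. -/
theorem stmt_9 (px py pdx pdy ψ ψe u v r : ℝ → ℝ) (pdx' pdy' t : ℝ)
    (hpx : HasDerivAt px (u t * Real.cos (ψ t) - v t * Real.sin (ψ t)) t)
    (hpy : HasDerivAt py (u t * Real.sin (ψ t) + v t * Real.cos (ψ t)) t)
    (hψ : HasDerivAt ψ (r t) t)
    (hpdx : HasDerivAt pdx pdx' t) (hpdy : HasDerivAt pdy pdy' t)
    (hψe : DifferentiableAt ℝ ψe t)
    (hne : ¬(pdx t - px t = 0 ∧ pdy t - py t = 0))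
    (hx : ∀ s : ℝ, pdx s - px s
      = Real.sqrt ((pdx s - px s) ^ 2 + (pdy s - py s) ^ 2) * Real.cos (ψ s - ψe s))
    (hy : ∀ s : ℝ, pdy s - py s
      = Real.sqrt ((pdx s - px s) ^ 2 + (pdy s - py s) ^ 2) * Real.sin (ψ s - ψe s)) :
    HasDerivAt (fun s =>
        ((pdx s - px s) / Real.sqrt ((pdx s - px s) ^ 2 + (pdy s - py s) ^ 2))
            * Real.sin (ψ s)
          - ((pdy s - py s) / Real.sqrt ((pdx s - px s) ^ 2 + (pdy s - py s) ^ 2))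
            * Real.cos (ψ s))
      (r t * Real.cos (ψe t)
        + (u t / Real.sqrt ((pdx t - px t) ^ 2 + (pdy t - py t) ^ 2))
            * Real.sin (ψe t) * Real.cos (ψe t)
        + (v t / Real.sqrt ((pdx t - px t) ^ 2 + (pdy t - py t) ^ 2))
            * Real.cos (ψe t) ^ 2
        - (pdx' / Real.sqrt ((pdx t - px t) ^ 2 + (pdy t - py t) ^ 2))
            * (Real.sin (ψe t) * Real.cos (ψ t - ψe t) - Real.sin (ψ t))
        - (pdy' / Real.sqrt ((pdx t - px t) ^ 2 + (pdy t - py t) ^ 2))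
            * (Real.sin (ψe t) * Real.sin (ψ t - ψe t) + Real.cos (ψ t))) t := by
  have hex : HasDerivAt (fun s => pdx s - px s)
      (pdx' - (u t * Real.cos (ψ t) - v t * Real.sin (ψ t))) t := hpdx.sub hpx
  have hey : HasDerivAt (fun s => pdy s - py s)
      (pdy' - (u t * Real.sin (ψ t) + v t * Real.cos (ψ t))) t := hpdy.sub hpy
  have hq : HasDerivAt (fun s => (pdx s - px s) ^ 2 + (pdy s - py s) ^ 2)
      (2 * (pdx t - px t) * (pdx' - (u t * Real.cos (ψ t) - v t * Real.sin (ψ t)))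
        + 2 * (pdy t - py t) * (pdy' - (u t * Real.sin (ψ t) + v t * Real.cos (ψ t)))) t := by
    have h := (hex.pow 2).add (hey.pow 2)
    refine h.congr_deriv (Eq.symm ?_)
    ring
  have hq0 : (pdx t - px t) ^ 2 + (pdy t - py t) ^ 2 ≠ 0 := by
    rcases not_and_or.mp hne with h | h
    · have := pow_pos (abs_pos.mpr h) 2
      nlinarith [sq_nonneg (pdy t - py t), sq_abs (pdx t - px t)]
    · have := pow_pos (abs_pos.mpr h) 2
      nlinarith [sq_nonneg (pdx t - px t), sq_abs (pdy t - py t)]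
  have hqpos : 0 < (pdx t - px t) ^ 2 + (pdy t - py t) ^ 2 :=
    lt_of_le_of_ne (by positivity) (Ne.symm hq0)
  have hg : HasDerivAt (fun s => Real.sqrt ((pdx s - px s) ^ 2 + (pdy s - py s) ^ 2))
      (1 / (2 * Real.sqrt ((pdx t - px t) ^ 2 + (pdy t - py t) ^ 2)) *
        (2 * (pdx t - px t) * (pdx' - (u t * Real.cos (ψ t) - v t * Real.sin (ψ t)))
        + 2 * (pdy t - py t) * (pdy' - (u t * Real.sin (ψ t) + v t * Real.cos (ψ t))))) t :=
    (Real.hasDerivAt_sqrt hq0).comp t hq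
  have hd0 : Real.sqrt ((pdx t - px t) ^ 2 + (pdy t - py t) ^ 2) ≠ 0 :=
    ne_of_gt (Real.sqrt_pos.mpr hqpos)
  have h1 := (hex.div hg hd0).mul hψ.sin
  have h2 := (hey.div hg hd0).mul hψ.cos
  have h := h1.sub h2
  simp only [Pi.div_apply] at h
  refine h.congr_deriv (Eq.symm ?_)
  set d := Real.sqrt ((pdx t - px t) ^ 2 + (pdy t - py t) ^ 2) with hd
  have hd2 : d ^ 2 = (pdx t - px t) ^ 2 + (pdy t - py t) ^ 2 := Real.sq_sqrt hqpos.le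
  have hxt := hx t
  have hyt := hy t
  rw [← hd] at hxt hyt
  rw [hxt, hyt, Real.cos_sub, Real.sin_sub]
  have hsa := Real.sin_sq_add_cos_sq (ψ t)
  have hsb := Real.sin_sq_add_cos_sq (ψe t)
  set sa := Real.sin (ψ t)
  set ca := Real.cos (ψ t)
  set sb := Real.sin (ψe t)
  set cb := Real.cos (ψe t)
  have hdd : d * d⁻¹ = 1 := mul_inv_cancel₀ hd0
  linear_combination ((-1)*d⁻¹*v t + (-1)*cb*r t + (-1)*sb*cb*d⁻¹*u t + (1)*sb^2*d⁻¹*v t + (1)*ca*sb*cb*d⁻¹*pdx' + (-1)*ca*sb^2*d⁻¹*pdy' + (-1)*ca^2*sb*cb*d⁻¹*u t + (1)*ca^2*sb^2*d⁻¹*v t + (1)*sa*sb*cb*d⁻¹*pdy' + (1)*sa*sb^2*d⁻¹*pdx' + (-1)*sa^2*sb*cb*d⁻¹*u t + (1)*sa^2*sb^2*d⁻¹*v t) * hsa + (d⁻¹ * v t) * hsb + ((1)*ca*d⁻¹*pdy' + (-1)*ca^2*d⁻¹*v t + (-1)*ca^2*cb*r t + (1)*ca^3*sb*cb*d⁻¹*pdx'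 + (1)*ca^3*sb*cb*d*d⁻¹^2*pdx' + (-1)*ca^3*sb^2*d⁻¹*pdy' + (-1)*ca^3*sb^2*d*d⁻¹^2*pdy' + (-1)*ca^4*sb*cb*d⁻¹*u t + (-1)*ca^4*sb*cb*d*d⁻¹^2*u t + (1)*ca^4*sb^2*d⁻¹*v t + (1)*ca^4*sb^2*d*d⁻¹^2*v t + (-1)*sa*d⁻¹*pdx' + (1)*sa*ca^2*sb*cb*d⁻¹*pdy' + (1)*sa*ca^2*sb*cb*d*d⁻¹^2*pdy' + (1)*sa*ca^2*sb^2*d⁻¹*pdx' + (1)*sa*ca^2*sb^2*d*d⁻¹^2*pdx' + (-1)*sa^2*d⁻¹*v t + (-1)*sa^2*cb*r t + (1)*sa^2*ca*sb*cb*d⁻¹*pdx' + (1)*sa^2*ca*sb*cb*d*d⁻¹^2*pdx' + (-1)*sa^2*ca*sb^2*d⁻¹*pdy' + (-1)*sa^2*ca*sb^2*d*d⁻¹^2*pdy' + (-2)*sa^2*ca^2*sb*cb*d⁻¹*u t + (-2)*sa^2*ca^2*sb*cb*d*d⁻¹^2*u t + (2)*sa^2*ca^2*sb^2*d⁻¹*v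 t + (2)*sa^2*ca^2*sb^2*d*d⁻¹^2*v t + (1)*sa^3*sb*cb*d⁻¹*pdy' + (1)*sa^3*sb*cb*d*d⁻¹^2*pdy' + (1)*sa^3*sb^2*d⁻¹*pdx' + (1)*sa^3*sb^2*d*d⁻¹^2*pdx' + (-1)*sa^4*sb*cb*d⁻¹*u t + (-1)*sa^4*sb*cb*d*d⁻¹^2*u t + (1)*sa^4*sb^2*d⁻¹*v t + (1)*sa^4*sb^2*d*d⁻¹^2*v t) * hdd
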